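/- Under the assumptions of the 2-matrix model (W polynomial of degree 4, suitable integrability, τ ≠ 0), a monic polynomial p of degree k satisfies the biorthogonality conditions ∬ p(x) q(y) e^{-V(x)-W(y)+2τxy} dx dy = 0 for all polynomials q of degree ≤ k-1 if and only if p satisfies the multiple orthogonality relations ∫ p(x) xⁱ wⱼ(x) dx = 0 for i = 0,…,nⱼ-1 and j = 0,1,2, where wⱼ(x) = ∫ yʲ e^{-V(x)-W(y)+2τxy} dy, n₀ = ⌊(k+2)/3⌋, n₁ = ⌊(k+1)/3⌋, n₂ = ⌊k/3⌋. -/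

import Mathlib

open MeasureTheory Polynomial Filter Topology



-- degree facts for A - W with deg A ≤ 2, deg W = 4
lemma aux_deg (W A : Polynomial ℝ) (hW : W.degree = 4) (hA : A.degree ≤ 2) :
    (A - W).degree = 4 ∧ (A - W).leadingCoeff = -W.leadingCoeff := by
  have h1 : (-W).degree = 4 := by rwa [Polynomial.degree_neg]
  have h2 : A.degree < (-W).degree := by rw [h1]; exact lt_of_le_of_lt hA (by norm_num)
  have e : A - W = A + (-W) := by ring
  rw [e]
  constructor
  · rw [Polynomial.degree_add_eq_right_of_degree_lt h2, h1]
  · rw [Polynomial.leadingCoeff_add_of_degree_lt h2, Polynomial.leadingCoeff_neg]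

lemma aux_tendsto_bot (W A : Polynomial ℝ) (hW : W.degree = 4) (hlc : 0 < W.leadingCoeff)
    (hA : A.degree ≤ 2) :
    Tendsto (fun y => (A - W).eval y) atTop atBot ∧
    Tendsto (fun y => (A - W).eval y) atBot atBot := by
  obtain ⟨hd, hl⟩ := aux_deg W A hW hA
  have hdpos : 0 < (A - W).degree := by rw [hd]; norm_num
  have hlneg : (A - W).leadingCoeff ≤ 0 := by linarith
  constructor
  · exact Polynomial.tendsto_atBot_of_leadingCoeff_nonpos _ hdpos hlneg
  · -- compose with negation
    set S := A - W with hS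
    set T := S.comp (-X) with hT
    have hdX : (-X : Polynomial ℝ).degree = 1 := by
      rw [Polynomial.degree_neg, Polynomial.degree_X]
    have hnT : (-X : Polynomial ℝ).natDegree = 1 := by
      rw [Polynomial.natDegree_neg, Polynomial.natDegree_X]
    have hnS : S.natDegree = 4 := Polynomial.natDegree_eq_of_degree_eq_some hd
    have hlT : T.leadingCoeff = S.leadingCoeff := by
      rw [hT, Polynomial.leadingCoeff_comp (by rw [hnT]; norm_num), hnS]
      have : (-X : Polynomial ℝ).leadingCoeff = -1 := by
        rw [Polynomial.leadingCoeff_neg, Polynomial.leadingCoeff_X]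
      rw [this]; norm_num
    have hlT0 : T.leadingCoeff ≠ 0 := by rw [hlT, hl]; intro h; linarith [neg_eq_zero.mp h]
    have hT0 : T ≠ 0 := fun h => hlT0 (by simp [h])
    have hnTd : T.natDegree = 4 := by
      rw [hT, Polynomial.natDegree_comp, hnT, hnS]
    have hdT : T.degree = 4 := by
      rw [Polynomial.degree_eq_natDegree hT0, hnTd]; rfl
    have h1 : Tendsto (fun y => T.eval y) atTop atBot :=
      Polynomial.tendsto_atBot_of_leadingCoeff_nonpos _ (by rw [hdT]; norm_num)
        (by rw [hlT, hl]; linarith)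
    have h2 : Tendsto (fun y : ℝ => T.eval (-y)) atBot atBot :=
      h1.comp tendsto_neg_atBot_atTop
    have : ∀ y : ℝ, T.eval (-y) = S.eval y := by
      intro y; rw [hT, Polynomial.eval_comp]; simp
    simpa only [this] using h2


lemma pow_le_exp_of_one_le {t : ℝ} (ht : 1 ≤ t) (b : ℕ) : t ^ b ≤ Real.exp (b * t) := by
  have h0 : (0:ℝ) ≤ t := by linarith
  have h1 : t ≤ Real.exp t := by linarith [Real.add_one_le_exp t]
  calc t ^ b ≤ (Real.exp t) ^ b := pow_le_pow_left₀ h0 h1 b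
  _ = Real.exp (b * t) := by rw [← Real.exp_nat_mul]

lemma aux_abs_tendsto (W A : Polynomial ℝ) (hW : W.degree = 4) (hlc : 0 < W.leadingCoeff)
    (hA : A.degree ≤ 2) (b : ℕ) :
    Tendsto (fun y => |y| ^ b * Real.exp ((A - W).eval y)) atTop (𝓝 0) ∧
    Tendsto (fun y => |y| ^ b * Real.exp ((A - W).eval y)) atBot (𝓝 0) := by
  constructor
  · have hA' : (A + C (b:ℝ) * X).degree ≤ 2 := by
      refine le_trans (Polynomial.degree_add_le _ _) (max_le hA ?_)
      exact le_trans (Polynomial.degree_C_mul_X_le _) (by norm_num)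
    have htop := ((aux_tendsto_bot W (A + C (b:ℝ) * X) hW hlc hA').1)
    have hexp : Tendsto (fun y => Real.exp ((A + C (b:ℝ) * X - W).eval y)) atTop (𝓝 0) :=
      Real.tendsto_exp_atBot.comp htop
    refine squeeze_zero' ?_ ?_ hexp
    · filter_upwards with y; positivity
    · filter_upwards [eventually_ge_atTop (1:ℝ)] with y hy
      have : |y| ^ b ≤ Real.exp (b * y) := by
        rw [abs_of_nonneg (by linarith)]; exact pow_le_exp_of_one_le hy b
      have e1 : (b:ℝ) * y + (A - W).eval y = (A + C (b:ℝ) * X - W).eval y := by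
        simp only [Polynomial.eval_add, Polynomial.eval_sub, Polynomial.eval_mul,
          Polynomial.eval_C, Polynomial.eval_X]; ring
      have := mul_le_mul_of_nonneg_right this (Real.exp_pos ((A - W).eval y)).le
      rwa [← Real.exp_add, e1] at this
  · have hA' : (A - C (b:ℝ) * X).degree ≤ 2 := by
      refine le_trans (Polynomial.degree_sub_le _ _) (max_le hA ?_)
      exact le_trans (Polynomial.degree_C_mul_X_le _) (by norm_num)
    have htop := ((aux_tendsto_bot W (A - C (b:ℝ) * X) hW hlc hA').2)
    have hexp : Tendsto (fun y => Real.exp ((A - C (b:ℝ) * X - W).eval y)) atBot (𝓝 0) :=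
      Real.tendsto_exp_atBot.comp htop
    refine squeeze_zero' ?_ ?_ hexp
    · filter_upwards with y; positivity
    · filter_upwards [eventually_le_atBot (-1:ℝ)] with y hy
      have h1 : (1:ℝ) ≤ -y := by linarith
      have : |y| ^ b ≤ Real.exp (b * (-y)) := by
        rw [abs_of_nonpos (by linarith)]; exact pow_le_exp_of_one_le h1 b
      have e1 : (b:ℝ) * (-y) + (A - W).eval y = (A - C (b:ℝ) * X - W).eval y := by
        simp only [Polynomial.eval_add, Polynomial.eval_sub, Polynomial.eval_mul,
          Polynomial.eval_C, Polynomial.eval_X]; ring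
      have := mul_le_mul_of_nonneg_right this (Real.exp_pos ((A - W).eval y)).le
      rwa [← Real.exp_add, e1] at this

lemma bounded_of_tendsto (φ : ℝ → ℝ) (hc : Continuous φ)
    (h1 : Tendsto φ atTop (𝓝 0)) (h2 : Tendsto φ atBot (𝓝 0)) :
    ∃ M : ℝ, ∀ y, |φ y| ≤ M := by
  have h1' : Tendsto (fun y => |φ y|) atTop (𝓝 0) := by
    have := h1.abs; simpa using this
  have h2' : Tendsto (fun y => |φ y|) atBot (𝓝 0) := by
    have := h2.abs; simpa using this
  obtain ⟨A, hA⟩ := (h1'.eventually_le_const one_pos).exists_forall_of_atTop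
  obtain ⟨B, hB⟩ := (h2'.eventually_le_const one_pos).exists_forall_of_atBot
  obtain ⟨C', hC'⟩ := (isCompact_Icc (a := B) (b := A)).exists_bound_of_continuousOn
    (hc.continuousOn)
  refine ⟨max 1 C', fun y => ?_⟩
  rcases le_total y B with h | h
  · exact le_trans (hB y h) (le_max_left _ _)
  · rcases le_total A y with h' | h'
    · exact le_trans (hA y h') (le_max_left _ _)
    · have := hC' y ⟨h, h'⟩
      simpa using le_trans (by simpa using this) (le_max_right 1 C')


lemma base_integrable (W : Polynomial ℝ) (hW : W.degree = 4) (hlc : 0 < W.leadingCoeff)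
    (b : ℕ) (c : ℝ) :
    Integrable (fun y : ℝ => |y| ^ b * Real.exp (c * y - W.eval y)) := by
  set A : Polynomial ℝ := X ^ 2 + C c * X with hAdef
  have hA : A.degree ≤ 2 := by
    refine le_trans (Polynomial.degree_add_le _ _) (max_le ?_ ?_)
    · simpa using Polynomial.degree_X_pow_le (R := ℝ) 2
    · exact le_trans (Polynomial.degree_C_mul_X_le _) (by norm_num)
  set ψ : ℝ → ℝ := fun y => |y| ^ b * Real.exp ((A - W).eval y) with hψ
  have hcψ : Continuous ψ := by
    apply Continuous.mul (by continuity)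
    exact Real.continuous_exp.comp (A - W).continuous
  obtain ⟨h1, h2⟩ := aux_abs_tendsto W A hW hlc hA b
  obtain ⟨M, hM⟩ := bounded_of_tendsto ψ hcψ h1 h2
  have key : ∀ y : ℝ, |y| ^ b * Real.exp (c * y - W.eval y) = ψ y * Real.exp (-(1:ℝ) * y ^ 2) := by
    intro y
    rw [hψ]
    rw [mul_assoc, ← Real.exp_add]
    congr 2
    simp only [hAdef, Polynomial.eval_sub, Polynomial.eval_add, Polynomial.eval_pow,
      Polynomial.eval_mul, Polynomial.eval_C, Polynomial.eval_X]
    ring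
  have hlin : Continuous (fun y : ℝ => c * y - W.eval y) :=
    (continuous_const.mul continuous_id).sub W.continuous
  have hcont : Continuous (fun y : ℝ => |y| ^ b * Real.exp (c * y - W.eval y)) :=
    ((continuous_abs.pow b)).mul (Real.continuous_exp.comp hlin)
  refine Integrable.mono' ((integrable_exp_neg_mul_sq (one_pos)).const_mul M)
    hcont.aestronglyMeasurable ?_
  filter_upwards with y
  rw [Real.norm_eq_abs, abs_of_nonneg (by positivity), key y]
  have : ψ y ≤ M := le_trans (le_abs_self _) (hM y)
  have h0 : (0:ℝ) < Real.exp (-(1:ℝ) * y ^ 2) := Real.exp_pos _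
  calc ψ y * Real.exp (-(1:ℝ) * y ^ 2) ≤ M * Real.exp (-(1:ℝ) * y ^ 2) :=
        mul_le_mul_of_nonneg_right this h0.le
    _ = M * Real.exp (-1 * y ^ 2) := by norm_num

lemma poly_slice_int (W : Polynomial ℝ) (hW : W.degree = 4) (hlc : 0 < W.leadingCoeff)
    (g : Polynomial ℝ) (c : ℝ) :
    Integrable (fun y : ℝ => g.eval y * Real.exp (c * y - W.eval y)) := by
  have hlin : Continuous (fun y : ℝ => c * y - W.eval y) :=
    (continuous_const.mul continuous_id).sub W.continuous
  have hcont : Continuous (fun y : ℝ => g.eval y * Real.exp (c * y - W.eval y)) :=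
    g.continuous.mul (Real.continuous_exp.comp hlin)
  refine Integrable.mono'
    (integrable_finset_sum (Finset.range (g.natDegree + 1)) (fun b _ =>
      ((base_integrable W hW hlc b c).const_mul |g.coeff b|))) hcont.aestronglyMeasurable ?_
  filter_upwards with y
  rw [Real.norm_eq_abs, abs_mul, abs_of_nonneg (Real.exp_pos _).le]
  have h1 : |g.eval y| ≤ ∑ b ∈ Finset.range (g.natDegree + 1), |g.coeff b| * |y| ^ b := by
    conv_lhs => rw [Polynomial.eval_eq_sum_range]
    refine le_trans (Finset.abs_sum_le_sum_abs _ _) (le_of_eq ?_)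
    refine Finset.sum_congr rfl (fun b _ => ?_)
    rw [abs_mul, abs_pow]
  calc |g.eval y| * Real.exp (c * y - W.eval y)
      ≤ (∑ b ∈ Finset.range (g.natDegree + 1), |g.coeff b| * |y| ^ b) *
          Real.exp (c * y - W.eval y) :=
        mul_le_mul_of_nonneg_right h1 (Real.exp_pos _).le
    _ = ∑ b ∈ Finset.range (g.natDegree + 1),
          |g.coeff b| * (|y| ^ b * Real.exp (c * y - W.eval y)) := by
        rw [Finset.sum_mul]; exact Finset.sum_congr rfl (fun b _ => by ring)

lemma poly_slice_tendsto (W : Polynomial ℝ) (hW : W.degree = 4) (hlc : 0 < W.leadingCoeff)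
    (g : Polynomial ℝ) (c : ℝ) :
    Tendsto (fun y : ℝ => g.eval y * Real.exp (c * y - W.eval y)) atTop (𝓝 0) ∧
    Tendsto (fun y : ℝ => g.eval y * Real.exp (c * y - W.eval y)) atBot (𝓝 0) := by
  have hA : (C c * X : Polynomial ℝ).degree ≤ 2 :=
    le_trans (Polynomial.degree_C_mul_X_le _) (by norm_num)
  have heval : ∀ y : ℝ, c * y - W.eval y = (C c * X - W).eval y := by
    intro y; simp
  have key : ∀ (l : Filter ℝ),
      (∀ b : ℕ, Tendsto (fun y => |y| ^ b * Real.exp ((C c * X - W).eval y)) l (𝓝 0)) →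
      Tendsto (fun y : ℝ => g.eval y * Real.exp (c * y - W.eval y)) l (𝓝 0) := by
    intro l hb
    have : ∀ y : ℝ, g.eval y * Real.exp (c * y - W.eval y) =
        ∑ b ∈ Finset.range (g.natDegree + 1),
          g.coeff b * (y ^ b * Real.exp (c * y - W.eval y)) := by
      intro y
      conv_lhs => rw [Polynomial.eval_eq_sum_range]
      rw [Finset.sum_mul]
      exact Finset.sum_congr rfl (fun b _ => by ring)
    simp only [this]
    have h0 : (0:ℝ) = ∑ b ∈ Finset.range (g.natDegree + 1), (0:ℝ) := by simp
    rw [h0]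
    apply tendsto_finset_sum
    intro b _
    have hb' : Tendsto (fun y : ℝ => y ^ b * Real.exp (c * y - W.eval y)) l (𝓝 0) := by
      apply squeeze_zero_norm _ (hb b)
      intro y
      rw [Real.norm_eq_abs, abs_mul, abs_pow, abs_of_nonneg (Real.exp_pos _).le, heval y]
    simpa using hb'.const_mul (g.coeff b)
  exact ⟨key atTop (fun b => (aux_abs_tendsto W (C c * X) hW hlc hA b).1),
    key atBot (fun b => (aux_abs_tendsto W (C c * X) hW hlc hA b).2)⟩


-- rewrite of the exponent
lemma exp_split (V : ℝ → ℝ) (W : Polynomial ℝ) (τ x y : ℝ) :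
    Real.exp (-V x - W.eval y + 2 * τ * x * y) =
      Real.exp (-V x) * Real.exp ((2 * τ * x) * y - W.eval y) := by
  rw [← Real.exp_add]; congr 1; ring

lemma Jint (V : ℝ → ℝ) (W : Polynomial ℝ) (hW : W.degree = 4) (hlc : 0 < W.leadingCoeff)
    (τ x : ℝ) (g : Polynomial ℝ) :
    Integrable (fun y : ℝ => g.eval y * Real.exp (-V x - W.eval y + 2 * τ * x * y)) := by
  have : (fun y : ℝ => g.eval y * Real.exp (-V x - W.eval y + 2 * τ * x * y)) =
      fun y : ℝ => Real.exp (-V x) *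
        (g.eval y * Real.exp ((2 * τ * x) * y - W.eval y)) := by
    funext y; rw [exp_split]; ring
  rw [this]
  exact (poly_slice_int W hW hlc g (2 * τ * x)).const_mul _

lemma Jtendsto (V : ℝ → ℝ) (W : Polynomial ℝ) (hW : W.degree = 4) (hlc : 0 < W.leadingCoeff)
    (τ x : ℝ) (g : Polynomial ℝ) :
    Tendsto (fun y : ℝ => g.eval y * Real.exp (-V x - W.eval y + 2 * τ * x * y)) atTop (𝓝 0) ∧
    Tendsto (fun y : ℝ => g.eval y * Real.exp (-V x - W.eval y + 2 * τ * x * y)) atBot (𝓝 0) := by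
  have e : (fun y : ℝ => g.eval y * Real.exp (-V x - W.eval y + 2 * τ * x * y)) =
      fun y : ℝ => Real.exp (-V x) *
        (g.eval y * Real.exp ((2 * τ * x) * y - W.eval y)) := by
    funext y; rw [exp_split]; ring
  rw [e]
  obtain ⟨h1, h2⟩ := poly_slice_tendsto W hW hlc g (2 * τ * x)
  constructor
  · simpa using h1.const_mul (Real.exp (-V x))
  · simpa using h2.const_mul (Real.exp (-V x))

lemma key_ftc (V : ℝ → ℝ) (W : Polynomial ℝ) (hW : W.degree = 4) (hlc : 0 < W.leadingCoeff)
    (τ x : ℝ) (g : Polynomial ℝ) :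
    ∫ y : ℝ, (Polynomial.derivative g + (C (2 * τ * x) - Polynomial.derivative W) * g).eval y *
      Real.exp (-V x - W.eval y + 2 * τ * x * y) = 0 := by
  set h : ℝ → ℝ := fun y => g.eval y * Real.exp (-V x - W.eval y + 2 * τ * x * y) with hh
  set h' : ℝ → ℝ := fun y =>
    (Polynomial.derivative g + (C (2 * τ * x) - Polynomial.derivative W) * g).eval y *
      Real.exp (-V x - W.eval y + 2 * τ * x * y) with hh'
  have hderiv : ∀ y : ℝ, HasDerivAt h (h' y) y := by
    intro y
    have hg : HasDerivAt (fun y : ℝ => g.eval y) ((Polynomial.derivative g).eval y) y :=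
      g.hasDerivAt y
    have h3 : HasDerivAt (fun y : ℝ => 2 * τ * x * y) (2 * τ * x) y := by
      simpa using (hasDerivAt_id y).const_mul (2 * τ * x)
    have h4 : HasDerivAt (fun y : ℝ => -V x - W.eval y)
        (0 - (Polynomial.derivative W).eval y) y :=
      (hasDerivAt_const y (-V x)).sub (W.hasDerivAt y)
    have hu : HasDerivAt (fun y : ℝ => -V x - W.eval y + 2 * τ * x * y)
        (0 - (Polynomial.derivative W).eval y + 2 * τ * x) y := h4.add h3
    have he : HasDerivAt (fun y : ℝ => Real.exp (-V x - W.eval y + 2 * τ * x * y))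
        (Real.exp (-V x - W.eval y + 2 * τ * x * y) * (0 - (Polynomial.derivative W).eval y + 2 * τ * x)) y :=
      hu.exp
    have := hg.mul he
    apply this.congr_deriv
    simp only [hh', Polynomial.eval_add, Polynomial.eval_mul, Polynomial.eval_sub,
      Polynomial.eval_C]
    ring
  have hint : Integrable h' := Jint V W hW hlc τ x _
  obtain ⟨htop, hbot⟩ := Jtendsto V W hW hlc τ x g
  have hIic : ∫ y in Set.Iic (0:ℝ), h' y = h 0 - 0 :=
    integral_Iic_of_hasDerivAt_of_tendsto' (fun y _ => hderiv y) hint.integrableOn hbot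
  have hIoi : ∫ y in Set.Ioi (0:ℝ), h' y = 0 - h 0 :=
    integral_Ioi_of_hasDerivAt_of_tendsto' (fun y _ => hderiv y) hint.integrableOn htop
  have h5 := intervalIntegral.integral_Iic_add_Ioi (b := (0:ℝ)) hint.integrableOn hint.integrableOn
  show ∫ y : ℝ, h' y = 0
  rw [← h5, hIic, hIoi]; ring


lemma key1 (V : ℝ → ℝ) (W : Polynomial ℝ) (hW : W.degree = 4) (hlc : 0 < W.leadingCoeff)
    (τ x : ℝ) (g : Polynomial ℝ) :
    ∫ y : ℝ, (Polynomial.derivative W * g - Polynomial.derivative g).eval y *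
        Real.exp (-V x - W.eval y + 2 * τ * x * y) =
      (2 * τ * x) * ∫ y : ℝ, g.eval y * Real.exp (-V x - W.eval y + 2 * τ * x * y) := by
  have hpt : ∀ y : ℝ, (Polynomial.derivative W * g - Polynomial.derivative g).eval y *
      Real.exp (-V x - W.eval y + 2 * τ * x * y) =
      (2 * τ * x) * (g.eval y * Real.exp (-V x - W.eval y + 2 * τ * x * y)) -
      (Polynomial.derivative g + (C (2 * τ * x) - Polynomial.derivative W) * g).eval y *
        Real.exp (-V x - W.eval y + 2 * τ * x * y) := by
    intro y
    simp only [Polynomial.eval_add, Polynomial.eval_mul, Polynomial.eval_sub, Polynomial.eval_C]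
    ring
  calc ∫ y : ℝ, (Polynomial.derivative W * g - Polynomial.derivative g).eval y *
        Real.exp (-V x - W.eval y + 2 * τ * x * y)
      = ∫ y : ℝ, ((2 * τ * x) * (g.eval y * Real.exp (-V x - W.eval y + 2 * τ * x * y)) -
          (Polynomial.derivative g + (C (2 * τ * x) - Polynomial.derivative W) * g).eval y *
            Real.exp (-V x - W.eval y + 2 * τ * x * y)) := by
        exact congrArg _ (funext hpt)
    _ = (2 * τ * x) * ∫ y : ℝ, g.eval y * Real.exp (-V x - W.eval y + 2 * τ * x * y) := by
        rw [integral_sub (((Jint V W hW hlc τ x g)).const_mul _) (Jint V W hW hlc τ x _),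
          key_ftc V W hW hlc τ x g, integral_const_mul]
        ring


lemma Wfacts (W : Polynomial ℝ) (hW : W.degree = 4) (hlc : 0 < W.leadingCoeff) :
    (Polynomial.derivative W).natDegree = 3 ∧
    (Polynomial.derivative W).leadingCoeff = 4 * W.leadingCoeff := by
  have hnW : W.natDegree = 4 := Polynomial.natDegree_eq_of_degree_eq_some hW
  have hc3 : (Polynomial.derivative W).coeff 3 = 4 * W.leadingCoeff := by
    rw [Polynomial.coeff_derivative]
    rw [show W.coeff (3 + 1) = W.leadingCoeff from by rw [Polynomial.leadingCoeff, hnW]]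
    push_cast; ring
  have hne : (Polynomial.derivative W).coeff 3 ≠ 0 := by rw [hc3]; positivity
  have hle : (Polynomial.derivative W).natDegree ≤ 3 := by
    have := Polynomial.natDegree_derivative_le W
    omega
  have hnd : (Polynomial.derivative W).natDegree = 3 :=
    le_antisymm hle (Polynomial.le_natDegree_of_ne_zero hne)
  refine ⟨hnd, ?_⟩
  rw [Polynomial.leadingCoeff, hnd, hc3]

lemma Tfact (W : Polynomial ℝ) (hW : W.degree = 4) (hlc : 0 < W.leadingCoeff)
    (g : Polynomial ℝ) (hg : g ≠ 0) :
    (Polynomial.derivative W * g - Polynomial.derivative g).natDegree = g.natDegree + 3 ∧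
    (Polynomial.derivative W * g - Polynomial.derivative g).leadingCoeff =
      4 * W.leadingCoeff * g.leadingCoeff := by
  obtain ⟨hnd, hlcd⟩ := Wfacts W hW hlc
  have hW' : Polynomial.derivative W ≠ 0 := fun h => by
    have : (Polynomial.derivative W).leadingCoeff = 0 := by rw [h]; simp
    rw [hlcd] at this; nlinarith
  set n := g.natDegree with hn
  have hmul : (Polynomial.derivative W * g).natDegree = n + 3 := by
    rw [Polynomial.natDegree_mul hW' hg, hnd]; omega
  have hcoeff : (Polynomial.derivative W * g - Polynomial.derivative g).coeff (n + 3) =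
      4 * W.leadingCoeff * g.leadingCoeff := by
    rw [Polynomial.coeff_sub]
    have h1 : (Polynomial.derivative g).coeff (n + 3) = 0 := by
      apply Polynomial.coeff_eq_zero_of_natDegree_lt
      have := Polynomial.natDegree_derivative_le g
      omega
    have h2 : (Polynomial.derivative W * g).coeff (n + 3) =
        (Polynomial.derivative W * g).leadingCoeff := by
      rw [Polynomial.leadingCoeff, hmul]
    rw [h1, h2, Polynomial.leadingCoeff_mul, hlcd]
    ring
  have hne : (Polynomial.derivative W * g - Polynomial.derivative g).coeff (n + 3) ≠ 0 := by
    rw [hcoeff]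
    have : g.leadingCoeff ≠ 0 := Polynomial.leadingCoeff_ne_zero.mpr hg
    positivity
  have hle : (Polynomial.derivative W * g - Polynomial.derivative g).natDegree ≤ n + 3 := by
    refine le_trans (Polynomial.natDegree_sub_le _ _) (max_le (le_of_eq hmul) ?_)
    have := Polynomial.natDegree_derivative_le g
    omega
  have heq : (Polynomial.derivative W * g - Polynomial.derivative g).natDegree = n + 3 :=
    le_antisymm hle (Polynomial.le_natDegree_of_ne_zero hne)
  exact ⟨heq, by rw [Polynomial.leadingCoeff, heq, hcoeff]⟩

lemma TX (W : Polynomial ℝ) (hW : W.degree = 4) (hlc : 0 < W.leadingCoeff) (i j : ℕ) :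
    ((fun h => Polynomial.derivative W * h - Polynomial.derivative h)^[i]
        ((X : Polynomial ℝ) ^ j)).natDegree = 3 * i + j ∧
    ((fun h => Polynomial.derivative W * h - Polynomial.derivative h)^[i]
        ((X : Polynomial ℝ) ^ j)).leadingCoeff = (4 * W.leadingCoeff) ^ i := by
  induction i with
  | zero => simp [Polynomial.natDegree_X_pow, (Polynomial.monic_X_pow j).leadingCoeff]
  | succ i ih =>
    obtain ⟨h1, h2⟩ := ih
    have hne : ((fun h => Polynomial.derivative W * h - Polynomial.derivative h)^[i]
        ((X : Polynomial ℝ) ^ j)) ≠ 0 := by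
      intro h
      rw [h] at h2
      simp at h2
      have : (4 * W.leadingCoeff) ^ i ≠ 0 := by positivity
      exact this h2.symm
    rw [Function.iterate_succ_apply']
    obtain ⟨h3, h4⟩ := Tfact W hW hlc _ hne
    refine ⟨by rw [h3, h1]; ring, ?_⟩
    rw [h4, h2, pow_succ]
    ring


section
variable (V : ℝ → ℝ) (W : Polynomial ℝ) (τ : ℝ)
variable (hint : ∀ a b : ℕ, Integrable (fun q : ℝ × ℝ =>
      |q.1| ^ a * |q.2| ^ b * Real.exp (-V q.1 - W.eval q.2 + 2 * τ * q.1 * q.2)))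
include hint

lemma intI (f g : Polynomial ℝ) :
    Integrable (fun z : ℝ × ℝ =>
      f.eval z.1 * g.eval z.2 * Real.exp (-V z.1 - W.eval z.2 + 2 * τ * z.1 * z.2)) := by
  set E : ℝ × ℝ → ℝ := fun z => Real.exp (-V z.1 - W.eval z.2 + 2 * τ * z.1 * z.2) with hE
  have hEm : AEStronglyMeasurable E (volume : Measure (ℝ × ℝ)) := by
    have := (hint 0 0).aestronglyMeasurable
    simpa [hE] using this
  have hmeas : AEStronglyMeasurable (fun z : ℝ × ℝ => f.eval z.1 * g.eval z.2 * E z) volume := by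
    refine AEStronglyMeasurable.mul ?_ hEm
    exact ((f.continuous.comp continuous_fst).mul
      (g.continuous.comp continuous_snd)).aestronglyMeasurable
  set G : ℝ × ℝ → ℝ := fun z =>
    ∑ a ∈ Finset.range (f.natDegree + 1), ∑ b ∈ Finset.range (g.natDegree + 1),
      (|f.coeff a| * |g.coeff b|) * (|z.1| ^ a * |z.2| ^ b * E z) with hG
  have hGint : Integrable G := by
    apply integrable_finset_sum
    intro a _
    apply integrable_finset_sum
    intro b _
    exact (hint a b).const_mul _
  refine Integrable.mono' hGint hmeas ?_
  filter_upwards with z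
  have hEpos : 0 < E z := Real.exp_pos _
  have h1 : |f.eval z.1| ≤ ∑ a ∈ Finset.range (f.natDegree + 1), |f.coeff a| * |z.1| ^ a := by
    conv_lhs => rw [Polynomial.eval_eq_sum_range]
    refine le_trans (Finset.abs_sum_le_sum_abs _ _) (le_of_eq ?_)
    exact Finset.sum_congr rfl (fun a _ => by rw [abs_mul, abs_pow])
  have h2 : |g.eval z.2| ≤ ∑ b ∈ Finset.range (g.natDegree + 1), |g.coeff b| * |z.2| ^ b := by
    conv_lhs => rw [Polynomial.eval_eq_sum_range]
    refine le_trans (Finset.abs_sum_le_sum_abs _ _) (le_of_eq ?_)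
    exact Finset.sum_congr rfl (fun b _ => by rw [abs_mul, abs_pow])
  have hnorm : ‖f.eval z.1 * g.eval z.2 * E z‖ = |f.eval z.1| * |g.eval z.2| * E z := by
    rw [Real.norm_eq_abs, abs_mul, abs_mul, abs_of_pos hEpos]
  rw [hnorm]
  calc |f.eval z.1| * |g.eval z.2| * E z
      ≤ (∑ a ∈ Finset.range (f.natDegree + 1), |f.coeff a| * |z.1| ^ a) *
        (∑ b ∈ Finset.range (g.natDegree + 1), |g.coeff b| * |z.2| ^ b) * E z := by
        apply mul_le_mul_of_nonneg_right _ hEpos.le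
        exact mul_le_mul h1 h2 (abs_nonneg _) (by positivity)
    _ = G z := by
        rw [hG, Finset.sum_mul_sum, Finset.sum_mul]
        refine Finset.sum_congr rfl (fun a _ => ?_)
        rw [Finset.sum_mul]
        exact Finset.sum_congr rfl (fun b _ => by ring)

lemma Ieq (f g : Polynomial ℝ) :
    ∫ z : ℝ × ℝ, f.eval z.1 * g.eval z.2 * Real.exp (-V z.1 - W.eval z.2 + 2 * τ * z.1 * z.2) =
      ∫ x : ℝ, f.eval x * ∫ y : ℝ, g.eval y * Real.exp (-V x - W.eval y + 2 * τ * x * y) := by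
  have hI := intI V W τ hint f g
  rw [MeasureTheory.Measure.volume_eq_prod] at hI ⊢
  rw [MeasureTheory.integral_prod _ hI]
  refine congrArg _ (funext fun x => ?_)
  rw [← integral_const_mul]
  refine congrArg _ (funext fun y => ?_)
  ring
end


section
variable (V : ℝ → ℝ) (W : Polynomial ℝ) (τ : ℝ)

-- expansion of I in monomials of g
lemma I_sum (hint : ∀ a b : ℕ, Integrable (fun q : ℝ × ℝ =>
      |q.1| ^ a * |q.2| ^ b * Real.exp (-V q.1 - W.eval q.2 + 2 * τ * q.1 * q.2)))
    (f g : Polynomial ℝ) :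
    ∫ z : ℝ × ℝ, f.eval z.1 * g.eval z.2 * Real.exp (-V z.1 - W.eval z.2 + 2 * τ * z.1 * z.2) =
      ∑ m ∈ Finset.range (g.natDegree + 1), g.coeff m *
        ∫ z : ℝ × ℝ, f.eval z.1 * z.2 ^ m * Real.exp (-V z.1 - W.eval z.2 + 2 * τ * z.1 * z.2) := by
  have hpt : ∀ z : ℝ × ℝ, f.eval z.1 * g.eval z.2 *
      Real.exp (-V z.1 - W.eval z.2 + 2 * τ * z.1 * z.2) =
      ∑ m ∈ Finset.range (g.natDegree + 1), g.coeff m *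
        (f.eval z.1 * z.2 ^ m * Real.exp (-V z.1 - W.eval z.2 + 2 * τ * z.1 * z.2)) := by
    intro z
    conv_lhs => rw [Polynomial.eval_eq_sum_range (x := z.2)]
    rw [Finset.mul_sum, Finset.sum_mul]
    exact Finset.sum_congr rfl (fun m _ => by ring)
  rw [show (fun z : ℝ × ℝ => f.eval z.1 * g.eval z.2 *
      Real.exp (-V z.1 - W.eval z.2 + 2 * τ * z.1 * z.2)) = fun z : ℝ × ℝ =>
      ∑ m ∈ Finset.range (g.natDegree + 1), g.coeff m *
        (f.eval z.1 * z.2 ^ m * Real.exp (-V z.1 - W.eval z.2 + 2 * τ * z.1 * z.2))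
    from funext hpt]
  rw [integral_finset_sum]
  · refine Finset.sum_congr rfl (fun m _ => ?_)
    rw [integral_const_mul]
  · intro m _
    have := (intI V W τ hint f (X ^ m)).const_mul (g.coeff m)
    simpa using this

lemma key2 (hint : ∀ a b : ℕ, Integrable (fun q : ℝ × ℝ =>
      |q.1| ^ a * |q.2| ^ b * Real.exp (-V q.1 - W.eval q.2 + 2 * τ * q.1 * q.2)))
    (hW : W.degree = 4) (hlc : 0 < W.leadingCoeff) (hτ : τ ≠ 0)
    (f g : Polynomial ℝ) :
    ∫ z : ℝ × ℝ, (f * X).eval z.1 * g.eval z.2 *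
        Real.exp (-V z.1 - W.eval z.2 + 2 * τ * z.1 * z.2) =
      (2 * τ)⁻¹ * ∫ z : ℝ × ℝ, f.eval z.1 *
        (Polynomial.derivative W * g - Polynomial.derivative g).eval z.2 *
        Real.exp (-V z.1 - W.eval z.2 + 2 * τ * z.1 * z.2) := by
  rw [Ieq V W τ hint, Ieq V W τ hint]
  rw [← integral_const_mul]
  refine congrArg _ (funext fun x => ?_)
  rw [key1 V W hW hlc τ x g]
  have h2τ : (2 : ℝ) * τ ≠ 0 := by simp [hτ]
  simp only [Polynomial.eval_mul, Polynomial.eval_X]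
  field_simp

lemma key3 (hint : ∀ a b : ℕ, Integrable (fun q : ℝ × ℝ =>
      |q.1| ^ a * |q.2| ^ b * Real.exp (-V q.1 - W.eval q.2 + 2 * τ * q.1 * q.2)))
    (hW : W.degree = 4) (hlc : 0 < W.leadingCoeff) (hτ : τ ≠ 0)
    (f : Polynomial ℝ) (i : ℕ) (g : Polynomial ℝ) :
    ∫ z : ℝ × ℝ, (f * X ^ i).eval z.1 * g.eval z.2 *
        Real.exp (-V z.1 - W.eval z.2 + 2 * τ * z.1 * z.2) =
      ((2 * τ)⁻¹) ^ i * ∫ z : ℝ × ℝ, f.eval z.1 *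
        ((fun h => Polynomial.derivative W * h - Polynomial.derivative h)^[i] g).eval z.2 *
        Real.exp (-V z.1 - W.eval z.2 + 2 * τ * z.1 * z.2) := by
  induction i generalizing g with
  | zero => simp
  | succ i ih =>
    have e1 : f * X ^ (i + 1) = (f * X ^ i) * X := by ring
    rw [e1, key2 V W τ hint hW hlc hτ (f * X ^ i) g, ih _]
    rw [Function.iterate_succ_apply]
    rw [pow_succ]
    ring
end




theorem biorthogonality_iff_multiple_orthogonality (V : ℝ → ℝ) (W : Polynomial ℝ)
    (hW : W.degree = 4) (hlc : 0 < W.leadingCoeff) (τ : ℝ) (hτ : τ ≠ 0)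
    (hint : ∀ a b : ℕ, Integrable (fun q : ℝ × ℝ =>
      |q.1| ^ a * |q.2| ^ b * Real.exp (-V q.1 - W.eval q.2 + 2 * τ * q.1 * q.2)))
    (k : ℕ) (p : Polynomial ℝ) (hmonic : p.Monic) (hdeg : p.natDegree = k) :
    (∀ q : Polynomial ℝ, q.degree < (k : WithBot ℕ) →
      ∫ z : ℝ × ℝ, p.eval z.1 * q.eval z.2 * Real.exp (-V z.1 - W.eval z.2 + 2 * τ * z.1 * z.2) = 0)
    ↔ (∀ j : ℕ, j ≤ 2 → ∀ i : ℕ, i < (k + 2 - j) / 3 →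
      ∫ x : ℝ, p.eval x * x ^ i *
        (∫ y : ℝ, y ^ j * Real.exp (-V x - W.eval y + 2 * τ * x * y)) = 0) := by
  -- bridge between the two integral shapes
  have bridge : ∀ i j : ℕ,
      (∫ x : ℝ, p.eval x * x ^ i *
        (∫ y : ℝ, y ^ j * Real.exp (-V x - W.eval y + 2 * τ * x * y))) =
      ∫ z : ℝ × ℝ, (p * X ^ i).eval z.1 * ((X : Polynomial ℝ) ^ j).eval z.2 *
        Real.exp (-V z.1 - W.eval z.2 + 2 * τ * z.1 * z.2) := by
    intro i j
    rw [Ieq V W τ hint (p * X ^ i) (X ^ j)]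
    simp only [Polynomial.eval_mul, Polynomial.eval_pow, Polynomial.eval_X]
  have hτ2 : ((2 * τ)⁻¹ : ℝ) ≠ 0 := by
    simp [hτ]
  constructor
  · intro hL j hj i hi
    have hm : 3 * i + j < k := by omega
    obtain ⟨hu1, hu2⟩ := TX W hW hlc i j
    set u := ((fun h => Polynomial.derivative W * h - Polynomial.derivative h)^[i]
        ((X : Polynomial ℝ) ^ j)) with hu
    have hune : u ≠ 0 := by
      intro h
      rw [h] at hu2
      have : ((4 : ℝ) * W.leadingCoeff) ^ i ≠ 0 := by positivity
      exact this (by simpa using hu2.symm)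
    have hdu : u.degree < (k : WithBot ℕ) := by
      rw [Polynomial.degree_eq_natDegree hune, hu1]
      exact_mod_cast hm
    rw [bridge i j, key3 V W τ hint hW hlc hτ p i (X ^ j), hL u hdu, mul_zero]
  · intro hR
    set E : ℝ × ℝ → ℝ := fun z => Real.exp (-V z.1 - W.eval z.2 + 2 * τ * z.1 * z.2) with hE
    have hmono : ∀ m : ℕ, m < k →
        ∫ z : ℝ × ℝ, p.eval z.1 * z.2 ^ m * E z = 0 := by
      intro m
      induction m using Nat.strong_induction_on with
      | _ m IH =>
        intro hmk
        have hj : m % 3 ≤ 2 := by omega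
        have hmij : 3 * (m / 3) + m % 3 = m := by omega
        have hi : m / 3 < (k + 2 - m % 3) / 3 := by omega
        have h0 := hR (m % 3) hj (m / 3) hi
        rw [bridge (m / 3) (m % 3), key3 V W τ hint hW hlc hτ p (m / 3) (X ^ (m % 3))] at h0
        have h1 : ∫ z : ℝ × ℝ, p.eval z.1 *
            ((fun h => Polynomial.derivative W * h - Polynomial.derivative h)^[m / 3]
              ((X : Polynomial ℝ) ^ (m % 3))).eval z.2 * E z = 0 := by
          rcases mul_eq_zero.mp h0 with h | h
          · exact absurd h (pow_ne_zero _ hτ2)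
          · exact h
        obtain ⟨hu1, hu2⟩ := TX W hW hlc (m / 3) (m % 3)
        set u := ((fun h => Polynomial.derivative W * h - Polynomial.derivative h)^[m / 3]
            ((X : Polynomial ℝ) ^ (m % 3))) with hu
        rw [I_sum V W τ hint p u] at h1
        rw [hu1, hmij] at h1
        rw [Finset.sum_range_succ] at h1
        have hvanish : ∀ m' ∈ Finset.range m, u.coeff m' *
            ∫ z : ℝ × ℝ, p.eval z.1 * z.2 ^ m' * E z = 0 := by
          intro m' hm'
          have hm'' : m' < m := Finset.mem_range.mp hm'
          rw [IH m' hm'' (lt_trans hm'' hmk), mul_zero]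
        rw [Finset.sum_eq_zero hvanish, zero_add] at h1
        have hcoeff : u.coeff m = (4 * W.leadingCoeff) ^ (m / 3) := by
          rw [← hu2, Polynomial.leadingCoeff, hu1, hmij]
        have hcne : u.coeff m ≠ 0 := by rw [hcoeff]; positivity
        exact (mul_eq_zero.mp h1).resolve_left hcne
    intro q hq
    rw [I_sum V W τ hint p q]
    refine Finset.sum_eq_zero (fun m hm => ?_)
    by_cases hc : q.coeff m = 0
    · rw [hc, zero_mul]
    · have hqne : q ≠ 0 := fun h => hc (by simp [h])
      have hmk : m < k := by
        have h1 : (m : WithBot ℕ) ≤ q.degree := Polynomial.le_degree_of_ne_zero hc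
        have h2 : q.degree < (k : WithBot ℕ) := hq
        exact_mod_cast lt_of_le_of_lt h1 h2
      rw [hmono m hmk, mul_zero]
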